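/- For any resource m ∈ L∞(Ω) with 0 ≤ m ≤ 1 and (1/|Ω|)∫_Ω m = m₀ ∈ (0,1), the total equilibrium population F_μ(m) = ∫_Ω θ_{m,μ} satisfies m₀|Ω| ≤ F_μ(m) ≤ 3 m₀|Ω|. -/

import Mathlib

open Set MeasureTheory

private lemma aux_nonneg {f : ℝ → ℝ} {c d : ℝ} (hcd : c ≤ d)
    (h : ∀ x ∈ Set.Ioo c d, 0 ≤ f x) : 0 ≤ ∫ x in c..d, f x := by
  apply intervalIntegral.integral_nonneg_of_ae_restrict hcd
  have h1 : MeasureTheory.volume.restrict (Set.Icc c d)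
      = MeasureTheory.volume.restrict (Set.Ioo c d) :=
    (MeasureTheory.Measure.restrict_congr_set MeasureTheory.Ioo_ae_eq_Icc).symm
  rw [h1]
  filter_upwards [MeasureTheory.ae_restrict_mem measurableSet_Ioo] with x hx
  exact h x hx

set_option maxHeartbeats 1000000 in
/-- Bounds of Bai–He–Li: for any resource `m` with `0 ≤ m ≤ 1` and mean
value `m₀ ∈ (0,1)`, the total equilibrium population satisfies
`m₀|Ω| ≤ ∫ θ ≤ 3 m₀|Ω|`, where `Ω = (a, b)`. -/
theorem stmt_5 (a b : ℝ) (hab : a < b) (μ m₀ : ℝ) (hμ : 0 < μ)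
    (hm₀ : m₀ ∈ Set.Ioo (0 : ℝ) 1)
    (m : ℝ → ℝ) (hm : ∀ x ∈ Set.Ioo a b, 0 ≤ m x ∧ m x ≤ 1)
    (hmean : ∫ x in a..b, m x = m₀ * (b - a))
    (θ θd θdd : ℝ → ℝ)
    (hθd : ∀ x ∈ Set.Icc a b, HasDerivAt θ (θd x) x)
    (hθdd : ∀ x ∈ Set.Icc a b, HasDerivAt θd (θdd x) x)
    (heq : ∀ x ∈ Set.Ioo a b, μ * θdd x + θ x * (m x - θ x) = 0)
    (hNa : θd a = 0) (hNb : θd b = 0)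
    (hpos : ∀ x ∈ Set.Icc a b, 0 < θ x) :
    m₀ * (b - a) ≤ (∫ x in a..b, θ x) ∧ (∫ x in a..b, θ x) ≤ 3 * m₀ * (b - a) := by
  obtain ⟨hm₀0, hm₀1⟩ := hm₀
  have hab' : a ≤ b := hab.le
  have hsub : Set.Ioo a b ⊆ Set.Icc a b := Set.Ioo_subset_Icc_self
  have ha : a ∈ Set.Icc a b := ⟨le_rfl, hab'⟩
  have hb : b ∈ Set.Icc a b := ⟨hab', le_rfl⟩
  have huIcc : Set.uIcc a b = Set.Icc a b := Set.uIcc_of_le hab'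
  have hθc : ContinuousOn θ (Set.Icc a b) :=
    fun x hx => (hθd x hx).continuousAt.continuousWithinAt
  have hθdc : ContinuousOn θd (Set.Icc a b) :=
    fun x hx => (hθdd x hx).continuousAt.continuousWithinAt
  have hθne : ∀ x ∈ Set.Icc a b, θ x ≠ 0 := fun x hx => (hpos x hx).ne'
  have hBpos : 0 < m₀ * (b - a) := by nlinarith
  have hmInt : IntervalIntegrable m MeasureTheory.volume a b := by
    by_contra h
    rw [intervalIntegral.integral_undef h] at hmean
    linarith
  have hθInt : IntervalIntegrable θ MeasureTheory.volume a b :=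
    ContinuousOn.intervalIntegrable (by rwa [huIcc])
  have hgc : ContinuousOn (fun x => μ * θd x ^ 2 / θ x ^ 2) (Set.Icc a b) :=
    (continuousOn_const.mul (hθdc.pow 2)).div (hθc.pow 2)
      (fun x hx => pow_ne_zero 2 (hθne x hx))
  have hgInt : IntervalIntegrable (fun x => μ * θd x ^ 2 / θ x ^ 2)
      MeasureTheory.volume a b :=
    ContinuousOn.intervalIntegrable (by rwa [huIcc])
  have hkey : ∀ x ∈ Set.Ioo a b, μ * θdd x = θ x * (θ x - m x) := by
    intro x hx
    have h := heq x hx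
    have h2 : θ x * (θ x - m x) = -(θ x * (m x - θ x)) := by ring
    linarith
  -- FTC for μ θ'/θ
  have hHc : ContinuousOn (fun y => μ * θd y / θ y) (Set.Icc a b) :=
    (continuousOn_const.mul hθdc).div hθc hθne
  have hHderiv : ∀ x ∈ Set.Ioo a b, HasDerivAt (fun y => μ * θd y / θ y)
      (θ x - m x - μ * θd x ^ 2 / θ x ^ 2) x := by
    intro x hx
    have hx' := hsub hx
    have h1 : HasDerivAt (fun y => μ * θd y) (μ * θdd x) x := (hθdd x hx').const_mul μ
    have h2 := h1.div (hθd x hx') (hθne x hx')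
    refine HasDerivAt.congr_deriv h2 ?_
    rw [hkey x hx]
    have hθx := hθne x hx'
    field_simp
  have hφInt : IntervalIntegrable (fun x => θ x - m x - μ * θd x ^ 2 / θ x ^ 2)
      MeasureTheory.volume a b := (hθInt.sub hmInt).sub hgInt
  have hFTC : (∫ x in a..b, (θ x - m x - μ * θd x ^ 2 / θ x ^ 2))
      = μ * θd b / θ b - μ * θd a / θ a :=
    intervalIntegral.integral_eq_sub_of_hasDerivAt_of_le hab' hHc hHderiv hφInt
  have hzero : μ * θd b / θ b - μ * θd a / θ a = 0 := by rw [hNa, hNb]; ring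
  have hsplit : (∫ x in a..b, (θ x - m x - μ * θd x ^ 2 / θ x ^ 2))
      = (∫ x in a..b, θ x) - (∫ x in a..b, m x)
        - (∫ x in a..b, μ * θd x ^ 2 / θ x ^ 2) := by
    rw [intervalIntegral.integral_sub (hθInt.sub hmInt) hgInt,
      intervalIntegral.integral_sub hθInt hmInt]
  have hbalance : (∫ x in a..b, θ x)
      = m₀ * (b - a) + ∫ x in a..b, μ * θd x ^ 2 / θ x ^ 2 := by
    rw [hzero, hsplit, hmean] at hFTC
    linarith
  have hSnn : 0 ≤ ∫ x in a..b, μ * θd x ^ 2 / θ x ^ 2 :=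
    intervalIntegral.integral_nonneg hab' (fun u hu => by positivity)
  -- the key pointwise estimate  μ θ'^2 ≤ (2/3) θ^3
  have hwa : μ * θd a ^ 2 - 2/3 * θ a ^ 3 < 0 := by
    rw [hNa]
    have h3 : 0 < θ a ^ 3 := pow_pos (hpos a ha) 3
    nlinarith
  have hwb : μ * θd b ^ 2 - 2/3 * θ b ^ 3 < 0 := by
    rw [hNb]
    have h3 : 0 < θ b ^ 3 := pow_pos (hpos b hb) 3
    nlinarith
  have hwc : ContinuousOn (fun x => μ * θd x ^ 2 - 2/3 * θ x ^ 3) (Set.Icc a b) :=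
    (continuousOn_const.mul (hθdc.pow 2)).sub (continuousOn_const.mul (hθc.pow 3))
  have hψInt : IntervalIntegrable (fun x => m x * (-(2 * θ x * θd x)))
      MeasureTheory.volume a b := by
    apply hmInt.mul_continuousOn
    rw [huIcc]
    exact ((continuousOn_const.mul hθc).mul hθdc).neg
  have hwderiv : ∀ x ∈ Set.Ioo a b, HasDerivAt (fun y => μ * θd y ^ 2 - 2/3 * θ y ^ 3)
      (m x * (-(2 * θ x * θd x))) x := by
    intro x hx
    have hx' := hsub hx
    have h1 := ((hθdd x hx').pow 2).const_mul μ
    have h2 := ((hθd x hx').pow 3).const_mul (2/3 : ℝ)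
    have h3 := h1.sub h2
    refine HasDerivAt.congr_deriv h3 ?_
    have hk := hkey x hx
    push_cast
    norm_num
    linear_combination (2 : ℝ) * θd x * hk
  have hwle : ∀ x ∈ Set.Icc a b, μ * θd x ^ 2 - 2/3 * θ x ^ 3 ≤ 0 := by
    by_contra hcon
    push_neg at hcon
    obtain ⟨x₀, hx₀, hwx₀⟩ := hcon
    have hθd0 : θd x₀ ≠ 0 := by
      intro h0
      rw [h0] at hwx₀
      have h3 : 0 < θ x₀ ^ 3 := pow_pos (hpos x₀ hx₀) 3
      nlinarith
    have hx₀a : x₀ ≠ a := by rintro rfl; linarith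
    have hx₀b : x₀ ≠ b := by rintro rfl; linarith
    have hx₀o : x₀ ∈ Set.Ioo a b :=
      ⟨lt_of_le_of_ne hx₀.1 (Ne.symm hx₀a), lt_of_le_of_ne hx₀.2 hx₀b⟩
    rcases hθd0.lt_or_gt with hneg | hposd
    · -- θd x₀ < 0 : move right to the first zero of w
      set T := Set.Icc x₀ b ∩ {x | μ * θd x ^ 2 - 2/3 * θ x ^ 3 ≤ 0} with hTdef
      have hbT : b ∈ T := ⟨⟨hx₀.2, le_rfl⟩, hwb.le⟩
      have hTne : T.Nonempty := ⟨b, hbT⟩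
      have hTbdd : BddBelow T := ⟨x₀, fun x hx => hx.1.1⟩
      have hTclosed : IsClosed T := by
        have hwc' : ContinuousOn (fun x => μ * θd x ^ 2 - 2/3 * θ x ^ 3) (Set.Icc x₀ b) :=
          hwc.mono (Set.Icc_subset_Icc hx₀.1 le_rfl)
        exact hwc'.preimage_isClosed_of_isClosed isClosed_Icc isClosed_Iic
      set β := sInf T with hβdef
      have hβmem : β ∈ T := hTclosed.csInf_mem hTne hTbdd
      have hβle : μ * θd β ^ 2 - 2/3 * θ β ^ 3 ≤ 0 := hβmem.2
      have hβb : β ≤ b := hβmem.1.2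
      have hx₀β : x₀ < β := by
        rcases lt_or_eq_of_le hβmem.1.1 with h | h
        · exact h
        · exfalso; rw [← h] at hβle; linarith
      have hIco : ∀ x ∈ Set.Ico x₀ β, 0 < μ * θd x ^ 2 - 2/3 * θ x ^ 3 := by
        intro x hx
        by_contra hle
        push_neg at hle
        have hxT : x ∈ T := ⟨⟨hx.1, hx.2.le.trans hβb⟩, hle⟩
        exact absurd (csInf_le hTbdd hxT) (not_le.mpr hx.2)
      have hθdneg : ∀ x ∈ Set.Ico x₀ β, θd x < 0 := by
        intro x hx
        have hxI : x ∈ Set.Icc a b := ⟨hx₀.1.trans hx.1, hx.2.le.trans hβb⟩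
        rcases lt_trichotomy (θd x) 0 with h | h | h
        · exact h
        · exfalso
          have h3 : 0 < θ x ^ 3 := pow_pos (hpos x hxI) 3
          have := hIco x hx
          rw [h] at this
          nlinarith
        · exfalso
          have hcont : ContinuousOn θd (Set.Icc x₀ x) :=
            hθdc.mono (Set.Icc_subset_Icc hx₀.1 hxI.2)
          obtain ⟨c, hc, hc0⟩ := intermediate_value_Icc hx.1 hcont
            (show (0:ℝ) ∈ Set.Icc (θd x₀) (θd x) from ⟨hneg.le, h.le⟩)
          have hcIco : c ∈ Set.Ico x₀ β := ⟨hc.1, lt_of_le_of_lt hc.2 hx.2⟩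
          have hcI : c ∈ Set.Icc a b := ⟨hx₀.1.trans hc.1, (hc.2.trans hxI.2)⟩
          have h3 : 0 < θ c ^ 3 := pow_pos (hpos c hcI) 3
          have := hIco c hcIco
          rw [hc0] at this
          nlinarith
      have hcont1 : ContinuousOn (fun x => μ * θd x ^ 2 - 2/3 * θ x ^ 3) (Set.Icc x₀ β) :=
        hwc.mono (Set.Icc_subset_Icc hx₀.1 hβb)
      have hder1 : ∀ x ∈ Set.Ioo x₀ β,
          HasDerivAt (fun y => μ * θd y ^ 2 - 2/3 * θ y ^ 3) (m x * (-(2 * θ x * θd x))) x :=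
        fun x hx => hwderiv x ⟨lt_trans hx₀o.1 hx.1, lt_of_lt_of_le hx.2 hβb⟩
      have hint1 : IntervalIntegrable (fun x => m x * (-(2 * θ x * θd x)))
          MeasureTheory.volume x₀ β := by
        apply hψInt.mono_set
        rw [Set.uIcc_of_le hx₀β.le, huIcc]
        exact Set.Icc_subset_Icc hx₀.1 hβb
      have hW : (∫ x in x₀..β, m x * (-(2 * θ x * θd x)))
          = (μ * θd β ^ 2 - 2/3 * θ β ^ 3) - (μ * θd x₀ ^ 2 - 2/3 * θ x₀ ^ 3) :=
        intervalIntegral.integral_eq_sub_of_hasDerivAt_of_le hx₀β.le hcont1 hder1 hint1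
      have hnn : 0 ≤ ∫ x in x₀..β, m x * (-(2 * θ x * θd x)) := by
        apply aux_nonneg hx₀β.le
        intro x hx
        have hxab : x ∈ Set.Ioo a b := ⟨lt_trans hx₀o.1 hx.1, lt_of_lt_of_le hx.2 hβb⟩
        have hθdx : θd x < 0 := hθdneg x ⟨hx.1.le, hx.2⟩
        have hθx : 0 < θ x := hpos x (hsub hxab)
        have hmx : 0 ≤ m x := (hm x hxab).1
        have : 0 ≤ -(2 * θ x * θd x) := by nlinarith
        exact mul_nonneg hmx this
      linarith
    · -- θd x₀ > 0 : move left to the last zero of w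
      set T := Set.Icc a x₀ ∩ {x | μ * θd x ^ 2 - 2/3 * θ x ^ 3 ≤ 0} with hTdef
      have haT : a ∈ T := ⟨⟨le_rfl, hx₀.1⟩, hwa.le⟩
      have hTne : T.Nonempty := ⟨a, haT⟩
      have hTbdd : BddAbove T := ⟨x₀, fun x hx => hx.1.2⟩
      have hTclosed : IsClosed T := by
        have hwc' : ContinuousOn (fun x => μ * θd x ^ 2 - 2/3 * θ x ^ 3) (Set.Icc a x₀) :=
          hwc.mono (Set.Icc_subset_Icc le_rfl hx₀.2)
        exact hwc'.preimage_isClosed_of_isClosed isClosed_Icc isClosed_Iic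
      set α := sSup T with hαdef
      have hαmem : α ∈ T := hTclosed.csSup_mem hTne hTbdd
      have hαle : μ * θd α ^ 2 - 2/3 * θ α ^ 3 ≤ 0 := hαmem.2
      have haα : a ≤ α := hαmem.1.1
      have hαx₀ : α < x₀ := by
        rcases lt_or_eq_of_le hαmem.1.2 with h | h
        · exact h
        · exfalso; rw [h] at hαle; linarith
      have hIoc : ∀ x ∈ Set.Ioc α x₀, 0 < μ * θd x ^ 2 - 2/3 * θ x ^ 3 := by
        intro x hx
        by_contra hle
        push_neg at hle
        have hxT : x ∈ T := ⟨⟨haα.trans hx.1.le, hx.2⟩, hle⟩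
        exact absurd (le_csSup hTbdd hxT) (not_le.mpr hx.1)
      have hθdpos : ∀ x ∈ Set.Ioc α x₀, 0 < θd x := by
        intro x hx
        have hxI : x ∈ Set.Icc a b := ⟨haα.trans hx.1.le, hx.2.trans hx₀.2⟩
        rcases lt_trichotomy (θd x) 0 with h | h | h
        · exfalso
          have hcont : ContinuousOn θd (Set.Icc x x₀) :=
            hθdc.mono (Set.Icc_subset_Icc hxI.1 hx₀.2)
          obtain ⟨c, hc, hc0⟩ := intermediate_value_Icc hx.2 hcont
            (show (0:ℝ) ∈ Set.Icc (θd x) (θd x₀) from ⟨h.le, hposd.le⟩)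
          have hcIoc : c ∈ Set.Ioc α x₀ := ⟨lt_of_lt_of_le hx.1 hc.1, hc.2⟩
          have hcI : c ∈ Set.Icc a b := ⟨hxI.1.trans hc.1, hc.2.trans hx₀.2⟩
          have h3 : 0 < θ c ^ 3 := pow_pos (hpos c hcI) 3
          have := hIoc c hcIoc
          rw [hc0] at this
          nlinarith
        · exfalso
          have h3 : 0 < θ x ^ 3 := pow_pos (hpos x hxI) 3
          have := hIoc x hx
          rw [h] at this
          nlinarith
        · exact h
      have hcont2 : ContinuousOn (fun x => μ * θd x ^ 2 - 2/3 * θ x ^ 3) (Set.Icc α x₀) :=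
        hwc.mono (Set.Icc_subset_Icc haα hx₀.2)
      have hder2 : ∀ x ∈ Set.Ioo α x₀,
          HasDerivAt (fun y => μ * θd y ^ 2 - 2/3 * θ y ^ 3) (m x * (-(2 * θ x * θd x))) x :=
        fun x hx => hwderiv x ⟨lt_of_le_of_lt haα hx.1, lt_trans hx.2 hx₀o.2⟩
      have hint2 : IntervalIntegrable (fun x => m x * (-(2 * θ x * θd x)))
          MeasureTheory.volume α x₀ := by
        apply hψInt.mono_set
        rw [Set.uIcc_of_le hαx₀.le, huIcc]
        exact Set.Icc_subset_Icc haα hx₀.2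
      have hW : (∫ x in α..x₀, m x * (-(2 * θ x * θd x)))
          = (μ * θd x₀ ^ 2 - 2/3 * θ x₀ ^ 3) - (μ * θd α ^ 2 - 2/3 * θ α ^ 3) :=
        intervalIntegral.integral_eq_sub_of_hasDerivAt_of_le hαx₀.le hcont2 hder2 hint2
      have hnn : 0 ≤ ∫ x in α..x₀, -(m x * (-(2 * θ x * θd x))) := by
        apply aux_nonneg hαx₀.le
        intro x hx
        have hxab : x ∈ Set.Ioo a b := ⟨lt_of_le_of_lt haα hx.1, lt_trans hx.2 hx₀o.2⟩
        have hθdx : 0 < θd x := hθdpos x ⟨hx.1, hx.2.le⟩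
        have hθx : 0 < θ x := hpos x (hsub hxab)
        have hmx : 0 ≤ m x := (hm x hxab).1
        have h1 : m x * (-(2 * θ x * θd x)) ≤ 0 := by
          apply mul_nonpos_of_nonneg_of_nonpos hmx
          nlinarith
        linarith
      rw [intervalIntegral.integral_neg] at hnn
      linarith
  -- conclude
  have hg_le : ∀ x ∈ Set.Icc a b, μ * θd x ^ 2 / θ x ^ 2 ≤ 2/3 * θ x := by
    intro x hx
    have h1 := hwle x hx
    have h2 := hpos x hx
    rw [div_le_iff₀ (by positivity : (0:ℝ) < θ x ^ 2)]
    nlinarith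
  have hmono : (∫ x in a..b, μ * θd x ^ 2 / θ x ^ 2) ≤ ∫ x in a..b, 2/3 * θ x :=
    intervalIntegral.integral_mono_on hab' hgInt (hθInt.const_mul (2/3)) hg_le
  have hconst : (∫ x in a..b, 2/3 * θ x) = 2/3 * ∫ x in a..b, θ x :=
    intervalIntegral.integral_const_mul _ _
  constructor
  · linarith
  · linarith
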